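/- Let G be a group with normal subgroups P (a p-group) and N ≤ P, and let H act on P with P = [P, H] and N normal and H-invariant. If |[N, H]| = p^n, then N is contained in the (2n+1)-st term Z_{2n+1}(P) of the upper central series of P. -/

import Mathlib

open commutatorElement


section Aux

variable {G : Type*} [Group G]

/-- Three subgroups lemma modulo a normal subgroup `K`. -/
theorem three_subgroups_le' {A B C K : Subgroup G} [K.Normal]
    (h1 : ⁅⁅B, C⁆, A⁆ ≤ K) (h2 : ⁅⁅C, A⁆, B⁆ ≤ K) : ⁅⁅A, B⁆, C⁆ ≤ K := by
  have hker : (QuotientGroup.mk' K).ker = K := QuotientGroup.ker_mk' K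
  rw [← hker, ← Subgroup.map_eq_bot_iff] at h1 h2 ⊢
  rw [Subgroup.map_commutator, Subgroup.map_commutator] at h1 h2 ⊢
  exact Subgroup.commutator_commutator_eq_bot_of_rotate h1 h2

variable (P : Subgroup G)

/-- The upper central series of `P` as subgroups of the ambient group. -/
def ZsG (j : ℕ) : Subgroup G := (Subgroup.upperCentralSeries P j).map P.subtype

theorem ZsG_zero : ZsG P 0 = ⊥ := by
  rw [ZsG, upperCentralSeries_zero, Subgroup.map_bot]

theorem ZsG_le (j : ℕ) : ZsG P j ≤ P := Subgroup.map_subtype_le _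

theorem mem_ZsG_iff {j : ℕ} {x : G} :
    x ∈ ZsG P j ↔ ∃ hx : x ∈ P, (⟨x, hx⟩ : P) ∈ Subgroup.upperCentralSeries P j := by
  constructor
  · rintro ⟨y, hy, rfl⟩
    exact ⟨y.2, by simpa using hy⟩
  · rintro ⟨hx, hu⟩
    exact ⟨⟨x, hx⟩, hu, rfl⟩

theorem ZsG_mono {j k : ℕ} (h : j ≤ k) : ZsG P j ≤ ZsG P k :=
  Subgroup.map_mono (upperCentralSeries_mono _ h)

theorem le_ZsG_succ {S : Subgroup G} {j : ℕ} (hSP : S ≤ P)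
    (h : ⁅S, P⁆ ≤ ZsG P j) : S ≤ ZsG P (j + 1) := by
  intro x hx
  rw [mem_ZsG_iff]
  refine ⟨hSP hx, ?_⟩
  rw [mem_upperCentralSeries_succ_iff]
  intro y
  have hcomm : ⁅x, (y : G)⁆ ∈ ZsG P j :=
    h (Subgroup.commutator_mem_commutator hx y.2)
  rw [mem_ZsG_iff] at hcomm
  obtain ⟨hc, hu⟩ := hcomm
  have : ((⟨x, hSP hx⟩ : P) * y * (⟨x, hSP hx⟩ : P)⁻¹ * y⁻¹) = ⟨⁅x, (y : G)⁆, hc⟩ := by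
    ext
    simp [commutatorElement_def]
  rw [commutatorElement_def, this]
  exact hu

theorem ZsG_normal [hP : P.Normal] (j : ℕ) : (ZsG P j).Normal := by
  induction j with
  | zero => rw [ZsG_zero]; infer_instance
  | succ j ih =>
    constructor
    intro x hx g
    rw [mem_ZsG_iff] at hx ⊢
    obtain ⟨hxP, hxu⟩ := hx
    refine ⟨hP.conj_mem x hxP g, ?_⟩
    rw [mem_upperCentralSeries_succ_iff]
    intro y
    rw [mem_upperCentralSeries_succ_iff] at hxu
    have hyg : g⁻¹ * (y : G) * g ∈ P := by
      have := hP.conj_mem (y : G) y.2 g⁻¹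
      simpa using this
    have h1 : (⟨x, hxP⟩ : P) * ⟨g⁻¹ * (y : G) * g, hyg⟩ * (⟨x, hxP⟩ : P)⁻¹ *
        (⟨g⁻¹ * (y : G) * g, hyg⟩ : P)⁻¹ ∈ upperCentralSeries P j := hxu _
    have h2 : x * (g⁻¹ * (y : G) * g) * x⁻¹ * (g⁻¹ * (y : G) * g)⁻¹ ∈ ZsG P j := by
      rw [mem_ZsG_iff]
      exact ⟨_, h1⟩
    have h3 : g * (x * (g⁻¹ * (y : G) * g) * x⁻¹ * (g⁻¹ * (y : G) * g)⁻¹) * g⁻¹ ∈ ZsG P j :=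
      ih.conj_mem _ h2 g
    have hc : (g * x * g⁻¹) * (y : G) * (g * x * g⁻¹)⁻¹ * (y : G)⁻¹ ∈ ZsG P j := by
      have : (g * x * g⁻¹) * (y : G) * (g * x * g⁻¹)⁻¹ * (y : G)⁻¹ =
          g * (x * (g⁻¹ * (y : G) * g) * x⁻¹ * (g⁻¹ * (y : G) * g)⁻¹) * g⁻¹ := by
        group
      rw [this]
      exact h3
    rw [mem_ZsG_iff] at hc
    obtain ⟨hcP, hcu⟩ := hc
    have : ((⟨g * x * g⁻¹, hP.conj_mem x hxP g⟩ : P) * y *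
        (⟨g * x * g⁻¹, hP.conj_mem x hxP g⟩ : P)⁻¹ * y⁻¹) = ⟨_, hcP⟩ := by
      ext
      simp
    rw [commutatorElement_def, this]
    exact hcu

/-- The descending chain `N, ⁅N,P⁆, ⁅⁅N,P⁆,P⁆, …`. -/
def chainNP (N : Subgroup G) : ℕ → Subgroup G
  | 0 => N
  | (j + 1) => ⁅chainNP N j, P⁆

theorem chainNP_succ_def (N : Subgroup G) (j : ℕ) :
    chainNP P N (j + 1) = ⁅chainNP P N j, P⁆ := rfl

theorem chainNP_normal {N : Subgroup G} (hN : N.Normal) [P.Normal] (j : ℕ) :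
    (chainNP P N j).Normal := by
  induction j with
  | zero => exact hN
  | succ j ih => exact @Subgroup.commutator_normal _ _ _ _ ih _

theorem chainNP_succ_le {N : Subgroup G} (hN : N.Normal) [P.Normal] (j : ℕ) :
    chainNP P N (j + 1) ≤ chainNP P N j := by
  haveI := chainNP_normal P hN j
  exact Subgroup.commutator_le_left _ _

theorem chainNP_le {N : Subgroup G} (hN : N.Normal) [P.Normal] (j : ℕ) :
    chainNP P N j ≤ N := by
  induction j with
  | zero => exact le_rfl
  | succ j ih => exact (chainNP_succ_le P hN j).trans ih

theorem chainNP_eq_bot {p : ℕ} [Fact p.Prime] [Finite P] (hPp : IsPGroup p P)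
    {N : Subgroup G} (hNP : N ≤ P) : ∃ c, chainNP P N c = ⊥ := by
  have hle : ∀ j, chainNP P N j ≤ ((⊤ : Subgroup P).lowerCentralSeries j).map P.subtype := by
    intro j
    induction j with
    | zero =>
      have hmt : (⊤ : Subgroup ↥P).map P.subtype = P := by
        rw [← MonoidHom.range_eq_map, Subgroup.range_subtype]
      rw [lowerCentralSeries_zero, hmt]
      exact hNP
    | succ j ih =>
      have hmt : (⊤ : Subgroup ↥P).map P.subtype = P := by
        rw [← MonoidHom.range_eq_map, Subgroup.range_subtype]
      have h2 : (⊤ : Subgroup P).lowerCentralSeries (j + 1) = ⁅(⊤ : Subgroup P).lowerCentralSeries j, ⊤⁆ := rfl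
      rw [h2, Subgroup.map_commutator]
      exact Subgroup.commutator_mono ih hmt.ge
  obtain ⟨c, hc⟩ := nilpotent_iff_lowerCentralSeries.mp hPp.isNilpotent
  refine ⟨c, le_bot_iff.mp ?_⟩
  have := hle c
  rw [hc, Subgroup.map_bot] at this
  exact this

end Aux

/-- If `P = [P, H]`, `N ≤ P` with `P, N` normal, and `|[N, H]| = pⁿ`, then
`N ≤ Z_{2n+1}(P)`. -/
theorem stmt9 {G : Type*} [Group G] {p n : ℕ} (hp : p.Prime)
    (P N H : Subgroup G) [P.Normal] [N.Normal] [Finite P]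
    (hNP : N ≤ P) (hPp : IsPGroup p P)
    (hPH : ⁅P, H⁆ = P) (hNH : Nat.card (⁅N, H⁆ : Subgroup G) = p ^ n) :
    ∀ x (hx : x ∈ N), (⟨x, hNP hx⟩ : P) ∈ upperCentralSeries P (2 * n + 1) := by
  haveI : Fact p.Prime := ⟨hp⟩
  -- main induction
  have main : ∀ m (N' : Subgroup G), N'.Normal → N' ≤ P →
      Nat.card (⁅N', H⁆ : Subgroup G) ∣ p ^ m → N' ≤ ZsG P (2 * m + 1) := by
    intro m
    induction m with
    | zero =>
      intro N' hN' hN'P hcard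
      haveI := hN'
      rw [pow_zero, Nat.dvd_one, Subgroup.card_eq_one] at hcard
      have h1 : ⁅⁅H, N'⁆, P⁆ ≤ (⊥ : Subgroup G) := by
        rw [Subgroup.commutator_comm H N', hcard, Subgroup.commutator_bot_left]
      have h2 : ⁅⁅N', P⁆, H⁆ ≤ (⊥ : Subgroup G) := by
        rw [← hcard]
        exact Subgroup.commutator_mono (Subgroup.commutator_le_left _ _) le_rfl
      have h3 : ⁅⁅P, H⁆, N'⁆ ≤ (⊥ : Subgroup G) := three_subgroups_le' h1 h2
      rw [hPH, Subgroup.commutator_comm] at h3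
      have h4 : ⁅N', P⁆ ≤ ZsG P 0 := by rw [ZsG_zero]; exact h3
      exact le_ZsG_succ P hN'P h4
    | succ m ih =>
      intro N' hN' hN'P hcard
      haveI := hN'
      classical
      by_cases hc : Nat.card (⁅N', H⁆ : Subgroup G) ∣ p ^ m
      · exact (ih N' hN' hN'P hc).trans (ZsG_mono P (by omega))
      -- |⁅N', H⁆| = p ^ (m+1)
      have hMle : ⁅N', H⁆ ≤ N' := Subgroup.commutator_le_left _ _
      haveI : Finite (⁅N', H⁆ : Subgroup G) :=
        Finite.of_injective _ (Subgroup.inclusion_injective (hMle.trans hN'P))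
      have hMcard : Nat.card (⁅N', H⁆ : Subgroup G) = p ^ (m + 1) := by
        obtain ⟨i, hi, hieq⟩ := (Nat.dvd_prime_pow hp).mp hcard
        rcases Nat.lt_or_ge i (m + 1) with h | h
        · exact absurd (hieq ▸ pow_dvd_pow p (Nat.lt_succ_iff.mp h)) hc
        · rw [hieq, Nat.le_antisymm hi h]
      -- the chain
      have hMne_bot : ⁅N', H⁆ ≠ (⊥ : Subgroup G) := by
        intro hbot
        rw [hbot, Subgroup.card_eq_one.mpr rfl] at hMcard
        exact absurd hMcard.symm (Nat.ne_of_gt (Nat.one_lt_pow (Nat.succ_ne_zero m) hp.one_lt))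
      obtain ⟨c, hc0⟩ := chainNP_eq_bot P hPp (hN'P : N' ≤ P)
      have hex : ∃ j, ⁅chainNP P N' j, H⁆ ≠ ⁅N', H⁆ := by
        refine ⟨c, ?_⟩
        rw [hc0, Subgroup.commutator_bot_left]
        exact fun h => hMne_bot h.symm
      set k1 := Nat.find hex with hk1
      have hk1ne : k1 ≠ 0 := by
        intro h0
        have := Nat.find_spec hex
        rw [← hk1, h0] at this
        exact this rfl
      obtain ⟨k, hk⟩ := Nat.exists_eq_succ_of_ne_zero hk1ne
      have hMk : ⁅chainNP P N' k, H⁆ = ⁅N', H⁆ := by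
        have := Nat.find_min hex (by omega : k < k1)
        exact not_not.mp this
      have hMk1ne : ⁅chainNP P N' (k + 1), H⁆ ≠ ⁅N', H⁆ := by
        have := Nat.find_spec hex
        rwa [← hk1, hk] at this
      haveI hchk := chainNP_normal P ‹N'.Normal› k
      haveI hchk1 := chainNP_normal P ‹N'.Normal› (k + 1)
      have hchain_le_N : ∀ j, chainNP P N' j ≤ N' := chainNP_le P ‹N'.Normal›
      have hMk1le : ⁅chainNP P N' (k + 1), H⁆ ≤ ⁅N', H⁆ :=
        Subgroup.commutator_mono (hchain_le_N (k + 1)) le_rfl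
      -- card of the next commutator divides p ^ m
      have hcard1 : Nat.card (⁅chainNP P N' (k + 1), H⁆ : Subgroup G) ∣ p ^ m := by
        have hdvd : Nat.card (⁅chainNP P N' (k + 1), H⁆ : Subgroup G) ∣ p ^ (m + 1) := by
          rw [← hMcard]
          exact Subgroup.card_dvd_of_le hMk1le
        obtain ⟨i, hi, hieq⟩ := (Nat.dvd_prime_pow hp).mp hdvd
        rcases Nat.lt_or_ge i (m + 1) with h | h
        · exact hieq ▸ pow_dvd_pow p (Nat.lt_succ_iff.mp h)
        · exfalso
          apply hMk1ne
          apply Subgroup.eq_of_le_of_card_ge hMk1le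
          rw [hMcard, hieq, Nat.le_antisymm hi h]
      -- apply induction hypothesis to the (k+1)-st chain term
      have hZ1 : chainNP P N' (k + 1) ≤ ZsG P (2 * m + 1) :=
        ih _ hchk1 ((hchain_le_N (k + 1)).trans hN'P) hcard1
      -- M ≤ chainNP k, hence normalClosure M ≤ chainNP k
      have hMchain : ⁅N', H⁆ ≤ chainNP P N' k := by
        rw [← hMk]
        exact Subgroup.commutator_le_left _ _
      have hncl : Subgroup.normalClosure ((⁅N', H⁆ : Subgroup G) : Set G) ≤ chainNP P N' k :=
        Subgroup.normalClosure_le_normal hMchain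
      have hnclP : ⁅Subgroup.normalClosure ((⁅N', H⁆ : Subgroup G) : Set G), P⁆ ≤ ZsG P (2 * m + 1) := by
        calc ⁅Subgroup.normalClosure ((⁅N', H⁆ : Subgroup G) : Set G), P⁆
            ≤ ⁅chainNP P N' k, P⁆ := Subgroup.commutator_mono hncl le_rfl
          _ = chainNP P N' (k + 1) := (chainNP_succ_def P N' k).symm
          _ ≤ ZsG P (2 * m + 1) := hZ1
      -- the normal subgroup K
      haveI := ZsG_normal P (2 * m + 1)
      set K : Subgroup G := Subgroup.normalClosure ((⁅N', H⁆ : Subgroup G) : Set G) ⊔ ZsG P (2 * m + 1)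
        with hK
      haveI : K.Normal := Subgroup.sup_normal _ _
      have hKle : K ≤ ZsG P (2 * m + 2) := by
        apply sup_le
        · apply le_ZsG_succ P
          · exact (hncl.trans (hchain_le_N k)).trans hN'P
          · exact hnclP
        · exact ZsG_mono P (by omega)
      -- three subgroups lemma
      have h1 : ⁅⁅H, N'⁆, P⁆ ≤ K := by
        rw [Subgroup.commutator_comm H N']
        calc ⁅⁅N', H⁆, P⁆ ≤ ⁅chainNP P N' k, P⁆ := Subgroup.commutator_mono hMchain le_rfl
          _ = chainNP P N' (k + 1) := (chainNP_succ_def P N' k).symm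
          _ ≤ ZsG P (2 * m + 1) := hZ1
          _ ≤ K := le_sup_right
      have h2 : ⁅⁅N', P⁆, H⁆ ≤ K := by
        calc ⁅⁅N', P⁆, H⁆ ≤ ⁅N', H⁆ :=
              Subgroup.commutator_mono (Subgroup.commutator_le_left _ _) le_rfl
          _ ≤ Subgroup.normalClosure ((⁅N', H⁆ : Subgroup G) : Set G) := Subgroup.le_normalClosure
          _ ≤ K := le_sup_left
      have h3 : ⁅⁅P, H⁆, N'⁆ ≤ K := three_subgroups_le' h1 h2
      rw [hPH, Subgroup.commutator_comm] at h3
      have h4 : ⁅N', P⁆ ≤ ZsG P (2 * m + 2) := h3.trans hKle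
      have h5 : N' ≤ ZsG P (2 * m + 2 + 1) := le_ZsG_succ P hN'P h4
      have : 2 * m + 2 + 1 = 2 * (m + 1) + 1 := by omega
      rwa [this] at h5
  have hfin : N ≤ ZsG P (2 * n + 1) :=
    main n N ‹N.Normal› hNP (by rw [hNH])
  intro x hx
  have := hfin hx
  rw [mem_ZsG_iff] at this
  obtain ⟨hxP, hu⟩ := this
  exact hu
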